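/- For every i ∈ {1,…,n}, every s with 1 ≤ s ≤ p+1, and all indices j_1, …, j_s ∈ {1,…,n}, one has ϑ_i^{p+1−s} · [ϑ_{j_1}, ϑ_i]·[ϑ_{j_2}, ϑ_i]⋯[ϑ_{j_s}, ϑ_i] = 0 in Ξ_n(p). -/

import Mathlib

noncomputable section

open scoped BigOperators

/-- Commutator `[x, y] = x*y - y*x` in an associative ring. -/
def brk {A : Type*} [Ring A] (x y : A) : A := x * y - y * x

/-- The span of the generators of the free algebra on `ϑ_1, …, ϑ_n`. -/
def Espan (n : ℕ) : Submodule ℂ (FreeAlgebra ℂ (Fin n)) :=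
  Submodule.span ℂ (Set.range (FreeAlgebra.ι ℂ))

/-- Defining relations of the para-algebra `Ξ_n(p)`: for all `ξ, η, ζ` in the span of the
generators, `ξ^p·η + η·ξ^p = 0` and `[ξ, [η, ζ]] = 0`. -/
inductive XiRel (n p : ℕ) : FreeAlgebra ℂ (Fin n) → FreeAlgebra ℂ (Fin n) → Prop
  | anti : ∀ ξ η : FreeAlgebra ℂ (Fin n), ξ ∈ Espan n → η ∈ Espan n →
      XiRel n p (ξ ^ p * η + η * ξ ^ p) 0
  | central : ∀ ξ η ζ : FreeAlgebra ℂ (Fin n), ξ ∈ Espan n → η ∈ Espan n → ζ ∈ Espan n →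
      XiRel n p (ξ * (η * ζ - ζ * η) - (η * ζ - ζ * η) * ξ) 0

/-- The para-algebra `Ξ_n(p)` of order `p` and degree `n`. -/
abbrev Xi (n p : ℕ) : Type := RingQuot (XiRel n p)

/-- The generators `ϑ_i` of `Ξ_n(p)`. -/
def vth (n p : ℕ) (i : Fin n) : Xi n p :=
  RingQuot.mkAlgHom ℂ (XiRel n p) (FreeAlgebra.ι ℂ i)

/-- The span `E` of the generators `ϑ_1, …, ϑ_n` inside `Ξ_n(p)`. -/
def XiE (n p : ℕ) : Submodule ℂ (Xi n p) :=
  Submodule.span ℂ (Set.range (vth n p))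

lemma mem_Espan {n : ℕ} (a : Fin n) : FreeAlgebra.ι ℂ a ∈ Espan n :=
  Submodule.subset_span ⟨a, rfl⟩

lemma xi_anti (n p : ℕ) (a b : Fin n) :
    vth n p a ^ p * vth n p b + vth n p b * vth n p a ^ p = 0 := by
  have h := RingQuot.mkAlgHom_rel ℂ
    (XiRel.anti (n := n) (p := p) (FreeAlgebra.ι ℂ a) (FreeAlgebra.ι ℂ b) (mem_Espan a) (mem_Espan b))
  simpa [vth, map_add, map_mul, map_pow] using h

lemma xi_central (n p : ℕ) (c a b : Fin n) :
    Commute (vth n p c) (brk (vth n p a) (vth n p b)) := by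
  have h := RingQuot.mkAlgHom_rel ℂ
    (XiRel.central (n := n) (p := p) (FreeAlgebra.ι ℂ c) (FreeAlgebra.ι ℂ a) (FreeAlgebra.ι ℂ b)
      (mem_Espan c) (mem_Espan a) (mem_Espan b))
  simp only [map_sub, map_mul, map_zero] at h
  have h2 := sub_eq_zero.mp h
  unfold Commute SemiconjBy brk
  simpa [vth] using h2

lemma brk_comm_vth (n p : ℕ) (a b c : Fin n) :
    Commute (brk (vth n p a) (vth n p b)) (vth n p c) :=
  (xi_central n p c a b).symm

lemma brk_comm_brk (n p : ℕ) (a b a' b' : Fin n) :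
    Commute (brk (vth n p a) (vth n p b)) (brk (vth n p a') (vth n p b')) := by
  have h1 := brk_comm_vth n p a b a'
  have h2 := brk_comm_vth n p a b b'
  show Commute _ (vth n p a' * vth n p b' - vth n p b' * vth n p a')
  exact (h1.mul_right h2).sub_right (h2.mul_right h1)

lemma comm_listprod (n p : ℕ) {s : ℕ} (x : Xi n p) (g : Fin s → Fin n) (i : Fin n)
    (hx : ∀ a b : Fin n, Commute x (brk (vth n p a) (vth n p b))) :
    Commute x (List.ofFn fun t => brk (vth n p (g t)) (vth n p i)).prod :=
  Commute.list_prod_right _ _ fun y hy => by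
    obtain ⟨t, rfl⟩ := List.mem_ofFn.mp hy
    exact hx _ _

lemma nsmul_cancel {n p : ℕ} {x : Xi n p} {m : ℕ} (hm : 0 < m) (h : m • x = 0) : x = 0 := by
  have h2 : (m : ℂ) • x = 0 := by rw [Nat.cast_smul_eq_nsmul]; exact h
  have hm' : (m : ℂ) ≠ 0 := Nat.cast_ne_zero.mpr hm.ne'
  calc x = (m : ℂ)⁻¹ • ((m : ℂ) • x) := by rw [smul_smul, inv_mul_cancel₀ hm', one_smul]
    _ = 0 := by rw [h2, smul_zero]

lemma vth_pow_top (n p : ℕ) (i : Fin n) : vth n p i ^ (p + 1) = 0 := by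
  have h := xi_anti n p i i
  rw [← pow_succ, ← pow_succ'] at h
  exact nsmul_cancel two_pos (by rw [two_nsmul]; exact h)

lemma pow_mul_vth (n p : ℕ) (i j : Fin n) (k : ℕ) :
    vth n p i ^ (k + 1) * vth n p j
      = vth n p j * vth n p i ^ (k + 1)
        - (k + 1) • (brk (vth n p j) (vth n p i) * vth n p i ^ k) := by
  set T := vth n p i with hT
  set E := vth n p j with hE
  set c := brk E T with hcdef
  have hcom : T * c = c * T := (brk_comm_vth n p j i i).symm.eq
  have hmul : T * E = E * T - c := by rw [hcdef]; simp [brk]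
  induction k with
  | zero => simp [hmul]
  | succ k ih =>
    calc T ^ (k + 2) * E = T * (T ^ (k + 1) * E) := by rw [← mul_assoc, ← pow_succ']
      _ = T * (E * T ^ (k + 1) - (k + 1) • (c * T ^ k)) := by rw [ih]
      _ = (T * E) * T ^ (k + 1) - (k + 1) • ((T * c) * T ^ k) := by
          rw [mul_sub, mul_smul_comm, mul_assoc, mul_assoc]
      _ = (E * T - c) * T ^ (k + 1) - (k + 1) • (c * (T * T ^ k)) := by
          rw [hmul, hcom, mul_assoc]
      _ = E * T ^ (k + 2) - c * T ^ (k + 1) - (k + 1) • (c * T ^ (k + 1)) := by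
          rw [sub_mul, mul_assoc, ← pow_succ', ← pow_succ']
      _ = E * T ^ (k + 2) - (k + 2) • (c * T ^ (k + 1)) := by
          have h2 : c * T ^ (k + 1) + (k + 1) • (c * T ^ (k + 1))
              = (k + 2) • (c * T ^ (k + 1)) := by
            rw [add_comm, ← succ_nsmul]
          rw [sub_sub, h2]

lemma step_calc0 {A : Type*} [Ring A] (T E L c : A) (hc : c = E * T - T * E)
    (hEL : E * L = L * E) (hTL : T * L = L * T) (hIH : T * L = 0) : L * c = 0 := by
  have h0 : L * T = 0 := by rw [← hTL]; exact hIH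
  calc L * c = L * (E * T) - L * (T * E) := by rw [hc, mul_sub]
    _ = (L * E) * T - (L * T) * E := by rw [mul_assoc, mul_assoc]
    _ = (E * L) * T - 0 * E := by rw [hEL, h0]
    _ = E * (L * T) := by rw [zero_mul, sub_zero, mul_assoc]
    _ = 0 := by rw [h0, mul_zero]

lemma step_calc {A : Type*} [Ring A] (T E L c : A) (k : ℕ) (hc : c = E * T - T * E)
    (hEL : E * L = L * E) (hTL : Commute T L) (hcL : c * L = L * c) (hcT : Commute c T)
    (hIH : T ^ (k + 2) * L = 0)
    (e1 : T ^ (k + 1) * E = E * T ^ (k + 1) - (k + 1) • (c * T ^ k)) :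
    (k + 2) • (T ^ (k + 1) * (L * c)) = 0 := by
  have hLpow : ∀ m : ℕ, L * T ^ m = T ^ m * L := fun m => ((hTL.pow_left m).eq).symm
  have hL2 : L * T ^ (k + 2) = 0 := by rw [hLpow]; exact hIH
  have HLc : Commute T (L * c) := hTL.mul_right hcT.symm
  have hLcpow : T ^ (k + 1) * (L * c) = (L * c) * T ^ (k + 1) := (HLc.pow_left (k + 1)).eq
  have key : T ^ (k + 1) * (L * c) = - ((k + 1) • (T ^ (k + 1) * (L * c))) := by
    calc T ^ (k + 1) * (L * c) = L * (T ^ (k + 1) * c) := by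
          rw [← mul_assoc, ← hLpow, mul_assoc]
      _ = L * (T ^ (k + 1) * (E * T) - T ^ (k + 1) * (T * E)) := by rw [hc, mul_sub]
      _ = L * ((T ^ (k + 1) * E) * T - T ^ (k + 2) * E) := by
          rw [← mul_assoc, ← mul_assoc, ← pow_succ]
      _ = L * ((E * T ^ (k + 1) - (k + 1) • (c * T ^ k)) * T - T ^ (k + 2) * E) := by
          rw [e1]
      _ = L * (E * T ^ (k + 2) - (k + 1) • (c * T ^ (k + 1)) - T ^ (k + 2) * E) := by
          rw [sub_mul, smul_mul_assoc, mul_assoc E, ← pow_succ, mul_assoc c, ← pow_succ]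
      _ = (L * E) * T ^ (k + 2) - (k + 1) • (L * (c * T ^ (k + 1)))
            - (L * T ^ (k + 2)) * E := by
          rw [mul_sub, mul_sub, mul_smul_comm, ← mul_assoc, ← mul_assoc, ← mul_assoc]
      _ = E * (L * T ^ (k + 2)) - (k + 1) • (T ^ (k + 1) * (L * c)) - 0 * E := by
          rw [← hEL, mul_assoc E, hL2, ← mul_assoc L c, ← hLcpow]
      _ = - ((k + 1) • (T ^ (k + 1) * (L * c))) := by
          rw [hL2, mul_zero, zero_mul, sub_zero, zero_sub]
  calc (k + 2) • (T ^ (k + 1) * (L * c))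
      = T ^ (k + 1) * (L * c) + (k + 1) • (T ^ (k + 1) * (L * c)) := by
        rw [succ_nsmul, add_comm]
    _ = 0 := by nth_rewrite 1 [key]; exact neg_add_cancel _

lemma xi_main (n p : ℕ) (i : Fin n) :
    ∀ s : ℕ, s ≤ p + 1 → ∀ js : Fin s → Fin n,
      vth n p i ^ (p + 1 - s) *
        (List.ofFn fun t => brk (vth n p (js t)) (vth n p i)).prod = 0 := by
  intro s
  induction s with
  | zero => intro _ js; simpa using vth_pow_top n p i
  | succ s ih =>
    intro hs js
    have hsp : s ≤ p := Nat.succ_le_succ_iff.mp hs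
    set T := vth n p i with hT
    set E := vth n p (js (Fin.last s)) with hE
    set c := brk E T with hcdef
    set L := (List.ofFn fun t : Fin s => brk (vth n p (js t.castSucc)) T).prod with hL
    have hIH : T ^ (p + 1 - s) * L = 0 := ih (le_trans hsp (Nat.le_succ p)) fun t => js t.castSucc
    have hprod : (List.ofFn fun t : Fin (s + 1) => brk (vth n p (js t)) T).prod = L * c := by
      rw [List.ofFn_succ']
      simp [hL]
      rfl
    have hTL : Commute T L :=
      comm_listprod n p T _ i fun a b => (xi_central n p i a b)
    have hEL : Commute E L :=
      comm_listprod n p E _ i fun a b => (xi_central n p _ a b)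
    have hcL : Commute c L :=
      comm_listprod n p c _ i fun a b => (brk_comm_brk n p _ _ a b)
    have hcT : Commute c T := brk_comm_vth n p _ _ i
    have hc' : c = E * T - T * E := rfl
    rw [hprod]
    rcases hk : p - s with _ | k
    · -- s = p
      have h1 : p + 1 - (s + 1) = 0 := by omega
      have h2 : p + 1 - s = 1 := by omega
      rw [h1, pow_zero, one_mul]
      rw [h2, pow_one] at hIH
      exact step_calc0 T E L c hc' hEL.eq hTL.eq hIH
    · -- p - s = k + 1
      have h1 : p + 1 - (s + 1) = k + 1 := by omega
      have h2 : p + 1 - s = k + 2 := by omega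
      rw [h1]
      rw [h2] at hIH
      exact nsmul_cancel (Nat.succ_pos _)
        (step_calc T E L c k hc' hEL.eq hTL hcL.eq hcT hIH (pow_mul_vth n p i _ k))


/-- For every `i`, every `1 ≤ s ≤ p+1` and indices `j_1, …, j_s`, one has
`ϑ_i^{p+1−s} · [ϑ_{j_1}, ϑ_i]⋯[ϑ_{j_s}, ϑ_i] = 0` in `Ξ_n(p)`. -/
theorem stmt_4 (n p : ℕ) (hn : 0 < n) (hp : 0 < p)
    (i : Fin n) (s : ℕ) (hs1 : 1 ≤ s) (hs2 : s ≤ p + 1) (js : Fin s → Fin n) :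
    vth n p i ^ (p + 1 - s) *
      (List.ofFn fun t => brk (vth n p (js t)) (vth n p i)).prod = 0 :=
  xi_main n p i s hs2 js
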